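/- arXiv:2201.09276 — 2 statements merged into one kernel-verified Lean document; each statement's English description precedes it below -/
import Mathlib

section
/- Let R be a commutative local ring and A ∈ M₂(R). Then A is strongly rad-clean if and only if A ∈ GL₂(R), or A ∈ J(M₂(R)), or tr(A) ∈ U(R), det(A) ∈ J(R), and the quadratic equation x² + x = det(A)/(tr(A)² − 4det(A)) is solvable in R. -/
/-- `j` lies in the Jacobson radical of the corner ring `eSe` (with identity `e`):
every element of the form `e - (eye)·j` is invertible in the corner ring. -/
def MemCornerJacobson {S : Type*} [Ring S] (e j : S) : Prop :=
  ∀ y : S, ∃ s : S,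
    e * s * e = s ∧ s * (e - e * y * e * j) = e ∧ (e - e * y * e * j) * s = e

/-- `a` is strongly rad-clean: `a = e + u` with `e` idempotent, `u` a unit,
`ae = ea` and `eae ∈ J(eSe)`. -/
def IsStronglyRadClean {S : Type*} [Ring S] (a : S) : Prop :=
  ∃ e : S, IsIdempotentElem e ∧ IsUnit (a - e) ∧ a * e = e * a ∧
    MemCornerJacobson e (e * a * e)

section MainProof
open Matrix IsLocalRing
variable {R : Type*} [CommRing R] [IsLocalRing R]

lemma jacBot (a : R) : a ∈ Ideal.jacobson (⊥ : Ideal R) ↔ ¬ IsUnit a := by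
  rw [IsLocalRing.jacobson_eq_maximalIdeal (⊥ : Ideal R) bot_ne_top]
  exact Iff.rfl

lemma memMax {a : R} : a ∈ maximalIdeal R ↔ ¬ IsUnit a := Iff.rfl

lemma unit_one_sub' {a : R} (h : a ∈ maximalIdeal R) : IsUnit (1 - a) := by
  by_contra hu
  have h1 : (1:R) - a ∈ maximalIdeal R := hu
  have : (1:R) ∈ maximalIdeal R := by simpa using add_mem h1 h
  exact (maximalIdeal.isMaximal R).ne_top ((Ideal.eq_top_iff_one _).2 this)

lemma isUnit_add_of {a b : R} (ha : ¬ IsUnit a) (hb : IsUnit b) : IsUnit (a + b) := by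
  by_contra h
  have hm : (a + b) - a ∈ maximalIdeal R := sub_mem (memMax.2 h) (memMax.2 ha)
  simp only [add_sub_cancel_left] at hm
  exact memMax.1 hm hb

lemma isUnit_sub_of {a b : R} (ha : ¬ IsUnit a) (hb : IsUnit b) : IsUnit (b - a) := by
  have := isUnit_add_of (a := -a) (b := b) (by simpa using ha) hb
  simpa [sub_eq_add_neg, add_comm] using this

lemma idem_scalar {a : R} (h : a * a = a) : a = 0 ∨ a = 1 := by
  by_cases hu : IsUnit a
  · right
    obtain ⟨v, hv⟩ := hu.exists_left_inv
    calc a = v * (a * a) := by rw [← mul_assoc, hv, one_mul]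
    _ = v * a := by rw [h]
    _ = 1 := hv
  · left
    have h1 : IsUnit (1 - a) := unit_one_sub' (memMax.2 hu)
    obtain ⟨v, hv⟩ := h1.exists_left_inv
    have h2 : v * ((1 - a) * a) = 0 := by
      have h3 : (1 - a) * a = 0 := by linear_combination -h
      rw [h3, mul_zero]
    rwa [← mul_assoc, hv, one_mul] at h2

lemma add_adjugate2 (N : Matrix (Fin 2) (Fin 2) R) : N + adjugate N = N.trace • 1 := by
  rw [Matrix.eta_fin_two N, adjugate_fin_two]
  ext i j
  fin_cases i <;> fin_cases j <;> simp [trace_fin_two] <;> ring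

lemma ch2 (N : Matrix (Fin 2) (Fin 2) R) : N * N = N.trace • N - N.det • 1 := by
  have h := Matrix.mul_adjugate N
  have h2 := add_adjugate2 N
  have h3 : N * (N.trace • 1 - N) = N.det • 1 := by
    rw [← h]; congr 1; rw [← h2]; abel
  rw [mul_sub, mul_smul_comm, mul_one] at h3
  linear_combination (norm := abel) -h3

lemma corner2 (e M : Matrix (Fin 2) (Fin 2) R) (he : e * e = e) (hd : e.det = 0) :
    e * M * e = (e * M * e).trace • e := by
  have h := add_adjugate2 (e * M * e)
  have hadj : adjugate (e * M * e) * e = 0 := by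
    rw [adjugate_mul_distrib, adjugate_mul_distrib, Matrix.mul_assoc, Matrix.mul_assoc,
      adjugate_mul, hd]
    simp
  have h4 := congrArg (· * e) h
  simp only [Matrix.add_mul, Matrix.smul_mul, Matrix.one_mul] at h4
  rw [hadj, add_zero, Matrix.mul_assoc, Matrix.mul_assoc, he, ← Matrix.mul_assoc] at h4
  exact h4

lemma det_smul_one_add (a b : R) (e : Matrix (Fin 2) (Fin 2) R) :
    (a • (1 : Matrix (Fin 2) (Fin 2) R) + b • e).det = a^2 + a*b*e.trace + b^2*e.det := by
  rw [Matrix.eta_fin_two e]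
  simp [det_fin_two, trace_fin_two, Matrix.one_apply]
  ring

lemma unit_one_sub_mat {B : Matrix (Fin 2) (Fin 2) R}
    (h : ∀ i j, B i j ∈ maximalIdeal R) : IsUnit ((1 : Matrix (Fin 2) (Fin 2) R) - B) := by
  rw [Matrix.isUnit_iff_isUnit_det]
  have hd : ((1 : Matrix (Fin 2) (Fin 2) R) - B).det
      = 1 - (B 0 0 + B 1 1 - B 0 0 * B 1 1 + B 0 1 * B 1 0) := by
    simp [det_fin_two, Matrix.one_apply]
    ring
  rw [hd]
  refine unit_one_sub' ?_
  exact add_mem (sub_mem (add_mem (h 0 0) (h 1 1)) (Ideal.mul_mem_right _ _ (h 0 0)))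
    (Ideal.mul_mem_right _ _ (h 0 1))

lemma construct (A : Matrix (Fin 2) (Fin 2) R) (lam mu : R)
    (hs : lam + mu = A.trace) (hp : lam * mu = A.det)
    (hl : ¬ IsUnit lam) (hmu : IsUnit mu) : IsStronglyRadClean A := by
  have hv : IsUnit (mu - lam) := by
    by_contra h
    have : mu ∈ maximalIdeal R := by
      simpa using add_mem (memMax.2 h) (memMax.2 hl)
    exact memMax.1 this hmu
  obtain ⟨w, hw⟩ := hv.exists_right_inv
  set B : Matrix (Fin 2) (Fin 2) R := mu • 1 - A with hBdef
  have hCH : A * A = (lam + mu) • A - (lam * mu) • (1 : Matrix (Fin 2) (Fin 2) R) := by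
    rw [hs, hp]; exact ch2 A
  have hB2 : B * B = (mu - lam) • B := by
    have hx : B * B = (mu*mu) • (1 : Matrix (Fin 2) (Fin 2) R) - mu • A - mu • A + A * A := by
      rw [hBdef]
      simp only [sub_mul, mul_sub, smul_mul_assoc, mul_smul_comm, one_mul, mul_one, smul_smul]
      module
    rw [hx, hCH, hBdef]
    module
  set e : Matrix (Fin 2) (Fin 2) R := w • B with hedef
  have he : e * e = e := by
    show (w • B) * (w • B) = w • B
    rw [smul_mul_assoc, mul_smul_comm, smul_smul, hB2, smul_smul]
    congr 1
    linear_combination w * hw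
  have hAB : A * B = lam • B := by
    rw [hBdef, mul_sub, mul_smul_comm, mul_one, hCH]
    module
  have hBA : B * A = lam • B := by
    rw [hBdef, sub_mul, smul_mul_assoc, one_mul, hCH]
    module
  have hcomm : A * e = e * A := by
    show A * (w • B) = (w • B) * A
    rw [mul_smul_comm, smul_mul_assoc, hAB, hBA]
  have hAe : A * e = lam • e := by
    show A * (w • B) = lam • (w • B)
    rw [mul_smul_comm, hAB, smul_comm]
  have hveB : (mu - lam) • e = B := by
    show (mu - lam) • (w • B) = B
    rw [smul_smul, hw, one_smul]
  clear_value e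
  have hA' : A = mu • (1 : Matrix (Fin 2) (Fin 2) R) - (mu - lam) • e := by
    rw [hveB, hBdef]; abel
  have hAe2 : A - e = (lam - 1) • e + mu • ((1 : Matrix (Fin 2) (Fin 2) R) - e) := by
    rw [hA']; module
  have hoe : e * ((1 : Matrix (Fin 2) (Fin 2) R) - e) = 0 := by
    rw [mul_sub, mul_one, he, sub_self]
  have heo : ((1 : Matrix (Fin 2) (Fin 2) R) - e) * e = 0 := by
    rw [sub_mul, one_mul, he, sub_self]
  have hoo : ((1 : Matrix (Fin 2) (Fin 2) R) - e) * ((1 : Matrix (Fin 2) (Fin 2) R) - e)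
      = (1 : Matrix (Fin 2) (Fin 2) R) - e := by
    rw [mul_sub, mul_one, heo, sub_zero]
  have hprod : ∀ a b c d : R,
      (a • e + b • ((1 : Matrix (Fin 2) (Fin 2) R) - e)) *
        (c • e + d • ((1 : Matrix (Fin 2) (Fin 2) R) - e))
      = (a*c) • e + (b*d) • ((1 : Matrix (Fin 2) (Fin 2) R) - e) := by
    intro a b c d
    rw [add_mul, mul_add, mul_add, smul_mul_assoc, smul_mul_assoc, smul_mul_assoc, smul_mul_assoc,
      mul_smul_comm, mul_smul_comm, mul_smul_comm, mul_smul_comm, he, hoe, heo, hoo]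
    simp [smul_smul]
  obtain ⟨w1, hw1⟩ := (unit_one_sub' (memMax.2 hl)).exists_right_inv
  obtain ⟨wm, hwm⟩ := hmu.exists_right_inv
  have hunit : IsUnit (A - e) := by
    have e1 : (lam - 1) * (-w1) = 1 := by linear_combination hw1
    have h1 : (A - e) * ((-w1) • e + wm • ((1 : Matrix (Fin 2) (Fin 2) R) - e)) = 1 := by
      rw [hAe2, hprod, e1, hwm, one_smul, one_smul]
      abel
    have h2 : ((-w1) • e + wm • ((1 : Matrix (Fin 2) (Fin 2) R) - e)) * (A - e) = 1 := by
      rw [hAe2, hprod]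
      rw [show (-w1) * (lam - 1) = 1 by linear_combination hw1,
        show wm * mu = 1 by linear_combination hwm, one_smul, one_smul]
      abel
    exact ⟨⟨A - e, _, h1, h2⟩, rfl⟩
  have heAe : e * A * e = lam • e := by
    rw [← hcomm, Matrix.mul_assoc, he]
    exact hAe
  refine ⟨e, he, hunit, hcomm, ?_⟩
  intro y
  set c : Matrix (Fin 2) (Fin 2) R := e * y * e * (e * A * e) with hc
  have hc' : c = lam • (e * y * e) := by
    rw [hc, heAe, mul_smul_comm, Matrix.mul_assoc (e * y) e e, he]
  have hcm : ∀ i j, c i j ∈ maximalIdeal R := by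
    intro i j
    rw [hc', Matrix.smul_apply, smul_eq_mul]
    exact Ideal.mul_mem_right _ _ (memMax.2 hl)
  have hM : IsUnit ((1 : Matrix (Fin 2) (Fin 2) R) - c) := unit_one_sub_mat hcm
  have hMd := (Matrix.isUnit_iff_isUnit_det _).1 hM
  set t : Matrix (Fin 2) (Fin 2) R := ((1 : Matrix (Fin 2) (Fin 2) R) - c)⁻¹ with htdef
  have ht1 : ((1 : Matrix (Fin 2) (Fin 2) R) - c) * t = 1 := Matrix.mul_nonsing_inv _ hMd
  have ht2 : t * ((1 : Matrix (Fin 2) (Fin 2) R) - c) = 1 := Matrix.nonsing_inv_mul _ hMd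
  have hce : c * e = c := by
    rw [hc', smul_mul_assoc, Matrix.mul_assoc (e * y) e e, he]
  have hec : e * c = c := by
    rw [hc', mul_smul_comm]
    congr 1
    rw [← Matrix.mul_assoc, ← Matrix.mul_assoc, he]
  have hMe : ((1 : Matrix (Fin 2) (Fin 2) R) - c) * e = e - c := by
    rw [sub_mul, one_mul, hce]
  have heM : e * ((1 : Matrix (Fin 2) (Fin 2) R) - c) = e - c := by
    rw [mul_sub, mul_one, hec]
  have het : e * t = t * e := by
    calc e * t = (t * ((1 : Matrix (Fin 2) (Fin 2) R) - c)) * (e * t) := by rw [ht2, one_mul]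
      _ = t * ((((1 : Matrix (Fin 2) (Fin 2) R) - c) * e) * t) := by
          rw [Matrix.mul_assoc, Matrix.mul_assoc]
      _ = t * ((e * ((1 : Matrix (Fin 2) (Fin 2) R) - c)) * t) := by rw [hMe, heM]
      _ = t * (e * (((1 : Matrix (Fin 2) (Fin 2) R) - c) * t)) := by rw [Matrix.mul_assoc]
      _ = t * e := by rw [ht1, mul_one]
  have hs' : e * t * e = e * t := by
    rw [Matrix.mul_assoc, ← het, ← Matrix.mul_assoc, he]
  refine ⟨e * t * e, ?_, ?_, ?_⟩
  · simp only [Matrix.mul_assoc]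
    rw [he, ← Matrix.mul_assoc e e (t * e), he]
  · rw [hs', ← hMe, Matrix.mul_assoc, ← Matrix.mul_assoc t, ht2, one_mul, he]
  · rw [hs', ← heM, het, Matrix.mul_assoc,
      ← Matrix.mul_assoc ((1 : Matrix (Fin 2) (Fin 2) R) - c) t e, ht1, one_mul, he]

end MainProof

open Matrix IsLocalRing in
theorem stmt5 {R : Type*} [CommRing R] [IsLocalRing R] (A : Matrix (Fin 2) (Fin 2) R) :
    IsStronglyRadClean A ↔
      IsUnit A ∨ (∀ i j, A i j ∈ Ideal.jacobson (⊥ : Ideal R)) ∨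
      (IsUnit A.trace ∧ A.det ∈ Ideal.jacobson (⊥ : Ideal R) ∧
        ∃ x : R, (A.trace ^ 2 - 4 * A.det) * (x ^ 2 + x) = A.det) := by
  constructor
  · rintro ⟨e, he, hu, hcomm, hJ⟩
    have he' : e * e = e := he
    have hdete : e.det * e.det = e.det := by rw [← det_mul, he']
    rcases idem_scalar hdete with hd0 | hd1
    · -- det e = 0
      have hE : e = e.trace • e := by
        have h0 := ch2 e
        rw [he', hd0] at h0
        simpa using h0
      have htre : e.trace * e.trace = e.trace := by
        have h0 := congrArg Matrix.trace hE
        rw [Matrix.trace_smul, smul_eq_mul] at h0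
        exact h0.symm
      rcases idem_scalar htre with ht0 | ht1
      · -- trace e = 0 : e = 0, A unit
        rw [ht0, zero_smul] at hE
        left
        rw [hE, sub_zero] at hu
        exact hu
      · -- trace e = 1, det e = 0 : main case
        right; right
        set f : Matrix (Fin 2) (Fin 2) R := 1 - e with hfdef
        have hfe : f * e = 0 := by rw [hfdef, sub_mul, one_mul, he', sub_self]
        have hef : e * f = 0 := by rw [hfdef, mul_sub, mul_one, he', sub_self]
        have hf : f * f = f := by
          nth_rewrite 2 [hfdef]
          rw [mul_sub, mul_one, hfe, sub_zero]
        have hdf : f.det = 0 := by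
          have hfm : f = (1:R) • (1 : Matrix (Fin 2) (Fin 2) R) + (-1:R) • e := by
            rw [hfdef]; module
          rw [hfm, det_smul_one_add, ht1, hd0]; ring
        have hcf : A * f = f * A := by
          rw [hfdef, mul_sub, sub_mul, mul_one, one_mul, hcomm]
        have heAe : e * A * e = A * e := by rw [← hcomm, Matrix.mul_assoc, he']
        have hfAf : f * A * f = A * f := by rw [← hcf, Matrix.mul_assoc, hf]
        set lam := (e * A * e).trace with hlamdef
        set nu := (f * A * f).trace with hnudef
        have hAe : A * e = lam • e := by rw [← heAe]; exact corner2 e A he' hd0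
        have hAf : A * f = nu • f := by rw [← hfAf]; exact corner2 f A hf hdf
        have hone : e + f = 1 := by rw [hfdef]; abel
        have hA : A = lam • e + nu • f := by
          have h0 : A * (e + f) = A := by rw [hone, mul_one]
          rw [← h0, mul_add, hAe, hAf]
        have htrf : f.trace = 1 := by
          rw [hfdef, Matrix.trace_sub, Matrix.trace_one, ht1]
          norm_num
        have htrA : A.trace = lam + nu := by
          have h0 := congrArg Matrix.trace hA
          rw [Matrix.trace_add, Matrix.trace_smul, Matrix.trace_smul, ht1, htrf,
            smul_eq_mul, smul_eq_mul, mul_one, mul_one] at h0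
          exact h0
        have hA1 : A = nu • (1 : Matrix (Fin 2) (Fin 2) R) + (lam - nu) • e := by
          rw [hA, hfdef]; module
        have hdetA : A.det = lam * nu := by
          rw [hA1, det_smul_one_add, ht1, hd0]; ring
        have hAs : A - e = nu • (1 : Matrix (Fin 2) (Fin 2) R) + (lam - nu - 1) • e := by
          rw [hA1]; module
        have hdetAe : (A - e).det = nu * (lam - 1) := by
          rw [hAs, det_smul_one_add, ht1, hd0]; ring
        have hnuu : IsUnit nu := by
          have h0 := (Matrix.isUnit_iff_isUnit_det _).1 hu
          rw [hdetAe] at h0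
          exact isUnit_of_mul_isUnit_left h0
        have hcornerEq : e * A * e = lam • e := by rw [heAe]; exact hAe
        have hlamn : ¬ IsUnit lam := by
          intro hl
          obtain ⟨li, hli⟩ := hl.exists_right_inv
          obtain ⟨sM, h1, h2, h3⟩ := hJ (li • (1 : Matrix (Fin 2) (Fin 2) R))
          have t1 : e * (li • (1 : Matrix (Fin 2) (Fin 2) R)) * e * (e * A * e) = e := by
            rw [hcornerEq, mul_smul_comm li e 1, mul_one, smul_mul_assoc li e e, he',
              smul_mul_assoc li e (lam • e), mul_smul_comm lam e e, he', smul_smul,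
              show li * lam = 1 by linear_combination hli, one_smul]
          rw [t1, sub_self, mul_zero] at h2
          have : e.trace = 0 := by rw [← h2]; simp
          rw [ht1] at this
          exact one_ne_zero this
        refine ⟨?_, ?_, ?_⟩
        · rw [htrA]; exact isUnit_add_of hlamn hnuu
        · rw [jacBot, hdetA]
          intro h0
          exact hlamn (isUnit_of_mul_isUnit_left h0)
        · have hvu : IsUnit (nu - lam) := isUnit_sub_of hlamn hnuu
          obtain ⟨vi, hvi⟩ := hvu.exists_right_inv
          refine ⟨lam * vi, ?_⟩
          rw [htrA, hdetA]
          linear_combination (lam^2*((nu - lam)*vi + 1) + lam*(nu - lam)) * hvi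
    · -- det e = 1 : e = 1, entries in radical
      have heu : IsUnit e := (Matrix.isUnit_iff_isUnit_det e).2 (hd1 ▸ isUnit_one)
      have he1 : e = 1 := by
        obtain ⟨v, hv⟩ := heu.exists_left_inv
        calc e = (v * e) * e := by rw [hv, one_mul]
        _ = v * (e * e) := by rw [Matrix.mul_assoc]
        _ = 1 := by rw [he', hv]
      subst he1
      right; left
      intro i j
      rw [jacBot]
      intro hij
      obtain ⟨vi, hvi⟩ := hij.exists_right_inv
      have key : ∀ y : Matrix (Fin 2) (Fin 2) R,
          IsUnit ((1 : Matrix (Fin 2) (Fin 2) R) - y * A) := by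
        intro y
        obtain ⟨sM, h1, h2, h3⟩ := hJ y
        simp only [one_mul, mul_one] at h1 h2 h3
        exact ⟨⟨_, sM, h3, h2⟩, rfl⟩
      fin_cases i <;> fin_cases j
      · have hmul : (1 : Matrix (Fin 2) (Fin 2) R) - !![vi,0;0,0] * A = !![1 - vi * A 0 0, -(vi * A 0 1); 0, 1] := by
          ext i' j'
          fin_cases i' <;> fin_cases j' <;>
            simp [Matrix.mul_apply, Fin.sum_univ_two, Matrix.one_apply, Matrix.vecMul,
              dotProduct, Matrix.vecHead, Matrix.vecTail]
        have h0 := (Matrix.isUnit_iff_isUnit_det _).1 (key !![vi,0;0,0])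
        have hd : ((1 : Matrix (Fin 2) (Fin 2) R) - !![vi,0;0,0] * A).det = 0 := by
          rw [hmul, det_fin_two_of]
          simp only [Fin.isValue, Fin.zero_eta, Fin.mk_one] at hvi ⊢
          linear_combination -hvi
        rw [hd] at h0
        exact not_isUnit_zero h0
      · have hmul : (1 : Matrix (Fin 2) (Fin 2) R) - !![0,0;vi,0] * A = !![1, 0; -(vi * A 0 0), 1 - vi * A 0 1] := by
          ext i' j'
          fin_cases i' <;> fin_cases j' <;>
            simp [Matrix.mul_apply, Fin.sum_univ_two, Matrix.one_apply, Matrix.vecMul,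
              dotProduct, Matrix.vecHead, Matrix.vecTail]
        have h0 := (Matrix.isUnit_iff_isUnit_det _).1 (key !![0,0;vi,0])
        have hd : ((1 : Matrix (Fin 2) (Fin 2) R) - !![0,0;vi,0] * A).det = 0 := by
          rw [hmul, det_fin_two_of]
          simp only [Fin.isValue, Fin.zero_eta, Fin.mk_one] at hvi ⊢
          linear_combination -hvi
        rw [hd] at h0
        exact not_isUnit_zero h0
      · have hmul : (1 : Matrix (Fin 2) (Fin 2) R) - !![0,vi;0,0] * A = !![1 - vi * A 1 0, -(vi * A 1 1); 0, 1] := by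
          ext i' j'
          fin_cases i' <;> fin_cases j' <;>
            simp [Matrix.mul_apply, Fin.sum_univ_two, Matrix.one_apply, Matrix.vecMul,
              dotProduct, Matrix.vecHead, Matrix.vecTail]
        have h0 := (Matrix.isUnit_iff_isUnit_det _).1 (key !![0,vi;0,0])
        have hd : ((1 : Matrix (Fin 2) (Fin 2) R) - !![0,vi;0,0] * A).det = 0 := by
          rw [hmul, det_fin_two_of]
          simp only [Fin.isValue, Fin.zero_eta, Fin.mk_one] at hvi ⊢
          linear_combination -hvi
        rw [hd] at h0
        exact not_isUnit_zero h0
      · have hmul : (1 : Matrix (Fin 2) (Fin 2) R) - !![0,0;0,vi] * A = !![1, 0; -(vi * A 1 0), 1 - vi * A 1 1] := by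
          ext i' j'
          fin_cases i' <;> fin_cases j' <;>
            simp [Matrix.mul_apply, Fin.sum_univ_two, Matrix.one_apply, Matrix.vecMul,
              dotProduct, Matrix.vecHead, Matrix.vecTail]
        have h0 := (Matrix.isUnit_iff_isUnit_det _).1 (key !![0,0;0,vi])
        have hd : ((1 : Matrix (Fin 2) (Fin 2) R) - !![0,0;0,vi] * A).det = 0 := by
          rw [hmul, det_fin_two_of]
          simp only [Fin.isValue, Fin.zero_eta, Fin.mk_one] at hvi ⊢
          linear_combination -hvi
        rw [hd] at h0
        exact not_isUnit_zero h0
  · rintro (hu | hJ | ⟨htr, hdet, x, hx⟩)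
    · exact ⟨0, by simp [IsIdempotentElem], by simpa using hu, by simp,
        fun y => ⟨0, by simp, by simp, by simp⟩⟩
    · have hm : ∀ i j, A i j ∈ maximalIdeal R := fun i j => memMax.2 ((jacBot _).1 (hJ i j))
      refine ⟨1, IsIdempotentElem.one, ?_, by rw [mul_one, one_mul], ?_⟩
      · have h0 : IsUnit ((1 : Matrix (Fin 2) (Fin 2) R) - A) := unit_one_sub_mat hm
        simpa using h0.neg
      · intro y
        have hyA : ∀ i j, (y * A) i j ∈ maximalIdeal R := by
          intro i j
          rw [Matrix.mul_apply, Fin.sum_univ_two]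
          exact add_mem (Ideal.mul_mem_left _ _ (hm 0 j)) (Ideal.mul_mem_left _ _ (hm 1 j))
        have hU := unit_one_sub_mat hyA
        have hUd := (Matrix.isUnit_iff_isUnit_det _).1 hU
        refine ⟨((1 : Matrix (Fin 2) (Fin 2) R) - y * A)⁻¹, ?_, ?_, ?_⟩ <;>
          simp only [one_mul, mul_one]
        · exact Matrix.nonsing_inv_mul _ hUd
        · exact Matrix.mul_nonsing_inv _ hUd
    · have hdn : ¬ IsUnit A.det := (jacBot _).1 hdet
      have hdd : IsUnit (A.trace^2 - 4*A.det) := by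
        by_contra h
        have h0 : A.trace^2 ∈ maximalIdeal R := by
          have h1 := add_mem (memMax.2 h) (Ideal.mul_mem_left _ 4 (memMax.2 hdn))
          simpa using h1
        exact memMax.1 h0 (htr.pow 2)
      have h2x : IsUnit (1 + 2*x) := by
        by_contra h
        have h2 : ¬ IsUnit ((1+2*x)*((1+2*x)*(A.trace^2 - 4*A.det))) :=
          fun hh => h (isUnit_of_mul_isUnit_left hh)
        have heq : (1+2*x)*((1+2*x)*(A.trace^2 - 4*A.det)) = A.trace^2 := by
          linear_combination 4*hx
        rw [heq] at h2
        exact h2 (htr.pow 2)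
      obtain ⟨w, hw⟩ := h2x.exists_right_inv
      have hs2 : A.trace^2 = (A.trace^2 - 4*A.det)*(1+2*x)^2 := by linear_combination -4*hx
      have hsum : x * A.trace * w + A.trace * (1+x) * w = A.trace := by
        linear_combination A.trace * hw
      have hprod : (x * A.trace * w) * (A.trace * (1+x) * w) = A.det := by
        linear_combination (x*(1+x)*w^2) * hs2 + ((1+2*x)^2*w^2) * hx
          + (A.det*((1+2*x)*w + 1)) * hw
      by_cases hlu : IsUnit (x * A.trace * w)
      · have hmun : ¬ IsUnit (A.trace * (1+x) * w) := fun h => hdn (hprod ▸ hlu.mul h)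
        exact construct A _ _ (by rw [add_comm]; exact hsum) (by rw [mul_comm]; exact hprod)
          hmun hlu
      · have hmuu : IsUnit (A.trace * (1+x) * w) := by
          by_contra h
          exact memMax.1 (hsum ▸ add_mem (memMax.2 hlu) (memMax.2 h)) htr
        exact construct A _ _ hsum hprod hlu hmuu
end

section
/- Let R be a commutative local ring. If A ∈ M₂(R) is strongly rad-clean, then A ∈ GL₂(R), or A ∈ J(M₂(R)), or tr(A) ∈ U(R). -/
private lemma polar {R : Type*} [CommRing R] (M N : Matrix (Fin 2) (Fin 2) R) :
    M * N + N * M = M.trace • N + N.trace • M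
      + ((M * N).trace - M.trace * N.trace) • (1 : Matrix (Fin 2) (Fin 2) R) := by
  ext i j
  fin_cases i <;> fin_cases j <;>
    simp [Matrix.mul_apply, Matrix.trace, Matrix.diag, Fin.sum_univ_two, Matrix.one_apply] <;> ring

private lemma ch2_s11 {R : Type*} [CommRing R] (M : Matrix (Fin 2) (Fin 2) R) :
    M * M = M.trace • M - M.det • (1 : Matrix (Fin 2) (Fin 2) R) := by
  ext i j
  fin_cases i <;> fin_cases j <;>
    simp [Matrix.mul_apply, Matrix.trace, Matrix.diag, Matrix.det_fin_two,
      Fin.sum_univ_two, Matrix.one_apply] <;> ring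

private lemma corner_eq {R : Type*} [CommRing R] (e N : Matrix (Fin 2) (Fin 2) R)
    (ht : e.trace = 1) (h1 : e * N = N) (h2 : N * e = N) :
    N = N.trace • e := by
  have h := polar e N
  rw [h1, h2, ht, one_smul, one_mul, sub_self, zero_smul, add_zero] at h
  exact add_left_cancel h

private lemma idem01 {R : Type*} [CommRing R] [IsLocalRing R] (d : R) (hd : d * d = d) :
    d = 0 ∨ d = 1 := by
  rcases IsLocalRing.isUnit_or_isUnit_one_sub_self d with h | h
  · right
    have : d * d = d * 1 := by rw [hd, mul_one]
    exact h.mul_left_cancel this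
  · left
    have : (1 - d) * d = (1 - d) * 0 := by ring_nf; linear_combination -hd
    exact h.mul_left_cancel this

private lemma nonunit_add {R : Type*} [CommRing R] [IsLocalRing R] {a b : R}
    (ha : ¬ IsUnit a) (hb : IsUnit b) : IsUnit (a + b) := by
  by_contra hab
  have h1 : a ∈ IsLocalRing.maximalIdeal R := ha
  have h2 : a + b ∈ IsLocalRing.maximalIdeal R := hab
  have : b ∈ IsLocalRing.maximalIdeal R := by
    have := Ideal.sub_mem _ h2 h1
    simpa using this
  exact this hb

private lemma det_key {R : Type*} [CommRing R] (A : Matrix (Fin 2) (Fin 2) R)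
    (i j : Fin 2) (r : R) :
    (1 - ((-r) • Matrix.single j i (1:R)) * A).det = A i j * r + 1 := by
  fin_cases i <;> fin_cases j <;>
    simp [Matrix.det_fin_two, Matrix.mul_apply, Matrix.single,
      Fin.sum_univ_two, Matrix.one_apply, Matrix.sub_apply, Matrix.smul_apply] <;> ring

theorem stmt11 {R : Type*} [CommRing R] [IsLocalRing R] (A : Matrix (Fin 2) (Fin 2) R)
    (h : IsStronglyRadClean A) :
    IsUnit A ∨ (∀ i j, A i j ∈ Ideal.jacobson (⊥ : Ideal R)) ∨ IsUnit A.trace := by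
  obtain ⟨e, he, hu, hcomm, hJ⟩ := h
  have hee : e * e = e := he
  have hdd : e.det * e.det = e.det := by rw [← Matrix.det_mul, hee]
  rcases idem01 _ hdd with hd0 | hd1
  · -- det e = 0
    have hch := ch2_s11 e
    rw [hee, hd0, zero_smul, sub_zero] at hch   -- hch : e = e.trace • e
    have htt : e.trace * e.trace = e.trace := by
      have := congrArg Matrix.trace hch
      rw [Matrix.trace_smul, smul_eq_mul] at this
      exact this.symm
    rcases idem01 _ htt with ht0 | ht1
    · left
      have he0 : e = 0 := by rw [hch, ht0, zero_smul]
      rw [he0, sub_zero] at hu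
      exact hu
    · -- e.trace = 1 : trace of A is a unit
      right; right
      have hUex : ∃ U V : Matrix (Fin 2) (Fin 2) R, U = A - e ∧ U * V = 1 ∧ V * U = 1 := by
        obtain ⟨u, hu'⟩ := hu
        exact ⟨↑u, ↑u⁻¹, hu', u.mul_inv, u.inv_mul⟩
      obtain ⟨U, V, hu', hUV, hVU⟩ := hUex
      have hcu : e * U = U * e := by
        rw [hu', mul_sub, sub_mul, hcomm]
      have hcv : e * V = V * e := by
        have h1 : V * (e * U) * V = V * (U * e) * V := by rw [hcu]
        rw [mul_assoc V (e * U) V, mul_assoc e U V, hUV, mul_one,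
          ← mul_assoc V U e, hVU, one_mul] at h1
        exact h1.symm
      have ff : (1 - e) * (1 - e) = 1 - e := by
        simp only [sub_mul, mul_sub, one_mul, mul_one, hee, sub_self, sub_zero]
      have hfu : (1 - e) * U = U * (1 - e) := by
        rw [sub_mul, mul_sub, hcu, mul_one, one_mul]
      have hfui : (1 - e) * V = V * (1 - e) := by
        rw [sub_mul, mul_sub, hcv, mul_one, one_mul]
      have htf : (1 - e).trace = 1 := by
        rw [Matrix.trace_sub, Matrix.trace_one, ht1]
        norm_num
      have hx : (1 - e) * U * (1 - e) = U * (1 - e) := by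
        rw [hfu, mul_assoc, ff]
      have hx' : (1 - e) * V * (1 - e) = V * (1 - e) := by
        rw [hfui, mul_assoc, ff]
      have hxx' : ((1 - e) * U * (1 - e)) * ((1 - e) * V * (1 - e)) = 1 - e := by
        rw [hx, hx', mul_assoc, ← mul_assoc (1 - e), hfui, mul_assoc, ff,
          ← mul_assoc, hUV, one_mul]
      have hxe1 : (1 - e) * ((1 - e) * U * (1 - e)) = (1 - e) * U * (1 - e) := by
        rw [← mul_assoc, ← mul_assoc, ff]
      have hxe2 : ((1 - e) * U * (1 - e)) * (1 - e) = (1 - e) * U * (1 - e) := by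
        rw [mul_assoc ((1 - e) * U), ff]
      have hxe1' : (1 - e) * ((1 - e) * V * (1 - e)) = (1 - e) * V * (1 - e) := by
        rw [← mul_assoc, ← mul_assoc, ff]
      have hxe2' : ((1 - e) * V * (1 - e)) * (1 - e) = (1 - e) * V * (1 - e) := by
        rw [mul_assoc ((1 - e) * V), ff]
      have hX := corner_eq (1 - e) _ htf hxe1 hxe2
      have hX' := corner_eq (1 - e) _ htf hxe1' hxe2'
      have h2 : (((1 - e) * U * (1 - e)).trace * ((1 - e) * V * (1 - e)).trace)
          • ((1 - e) * (1 - e)) = 1 - e := by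
        rw [← smul_mul_smul_comm, ← hX, ← hX']
        exact hxx'
      rw [ff] at h2
      have hone : ((1 - e) * U * (1 - e)).trace * ((1 - e) * V * (1 - e)).trace = 1 := by
        have h3 := congrArg Matrix.trace h2
        rw [Matrix.trace_smul, smul_eq_mul, htf, mul_one] at h3
        exact h3
      have hxunit : IsUnit ((1 - e) * U * (1 - e)).trace := IsUnit.of_mul_eq_one _ hone
      -- trace decomposition
      have heAe : e * A * e = A * e := by rw [← hcomm, mul_assoc, hee]
      have hx2 : U * (1 - e) = A - A * e := by
        rw [hu']
        simp only [mul_sub, sub_mul, mul_one, one_mul, hee]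
        abel
      have hA : e * A * e + (1 - e) * U * (1 - e) = A := by
        rw [heAe, hx, hx2]
        abel
      have htr : A.trace = (e * A * e).trace + ((1 - e) * U * (1 - e)).trace := by
        conv_lhs => rw [← hA]
        rw [Matrix.trace_add]
      -- (e*A*e).trace is not a unit
      have hnc : ¬ IsUnit (e * A * e).trace := by
        intro hc
        obtain ⟨v, hv⟩ := hc.exists_left_inv
        have hNe1 : e * (e * A * e) = e * A * e := by
          rw [← mul_assoc, ← mul_assoc, hee]
        have hNe2 : (e * A * e) * e = e * A * e := by
          rw [mul_assoc (e * A), hee]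
        have hNc := corner_eq e _ ht1 hNe1 hNe2
        obtain ⟨s, hs1, hs2, hs3⟩ := hJ (v • (1 : Matrix (Fin 2) (Fin 2) R))
        have h0 : e - e * (v • (1 : Matrix (Fin 2) (Fin 2) R)) * e * (e * A * e) = 0 := by
          conv_lhs => rw [hNc]
          simp only [mul_smul_comm, smul_mul_assoc, mul_one, smul_smul, hee]
          rw [mul_comm, hv, one_smul, sub_self]
        rw [h0, mul_zero] at hs2
        have : (0 : R) = 1 := by rw [← ht1, ← hs2, Matrix.trace_zero]
        exact zero_ne_one this
      rw [htr]
      exact nonunit_add hnc hxunit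
  · -- det e = 1 : e = 1 and A lies in the Jacobson radical
    have hue : IsUnit e := by
      rw [Matrix.isUnit_iff_isUnit_det, hd1]
      exact isUnit_one
    have he1 : e = 1 := by
      have : e * e = e * 1 := by rw [hee, mul_one]
      exact hue.mul_left_cancel this
    right; left
    intro i j
    rw [Ideal.mem_jacobson_bot]
    intro r
    obtain ⟨s, hs1, hs2, hs3⟩ := hJ ((-r) • Matrix.single j i (1:R))
    rw [he1] at hs2 hs3
    simp only [one_mul, mul_one] at hs2 hs3
    have hun : IsUnit (1 - ((-r) • Matrix.single j i (1:R)) * A) :=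
      ⟨⟨_, s, hs3, hs2⟩, rfl⟩
    have hdet := (Matrix.isUnit_iff_isUnit_det _).mp hun
    rwa [det_key] at hdet
end
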